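/- Let Γ be a finite directed multigraph, A a coefficient system on Γ, and e₀ an edge with x = t(e₀) ≠ y = h(e₀) such that the half-edge map A_{e₀,t} : A_x → A_{e₀} is an isomorphism. Let (Γ/e₀, A/α) be the contraction of (Γ, A) along this redundant half-edge. Then the map of cochain complexes π : C(Γ/e₀, A/α) → C(Γ, A) — given by the canonical identifications on all vertices v ∉ {x,y} and all edges f ≠ e₀, and sending a ∈ (A/α)_{[xy]} = A_y to (−A_{e₀,t}^{−1}(A_{e₀,h}(a)), a) ∈ A_x ⊕ A_y — commutes with the differentials and induces isomorphisms H⁰(Γ/e₀, A/α) ≅ H⁰(Γ, A) and H¹(Γ/e₀, A/α) ≅ H¹(Γ, A). -/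

import Mathlib

/-- A coefficient system on a finite directed multigraph with vertex type `V`,
edge type `E`, tail map `tl` and head map `hd`. -/
structure CoeffSys {V E : Type} (tl hd : E → V) where
  vert : V → Type
  edge : E → Type
  [vertGrp : ∀ v, AddCommGroup (vert v)]
  [edgeGrp : ∀ e, AddCommGroup (edge e)]
  mapT : ∀ e, vert (tl e) →+ edge e
  mapH : ∀ e, vert (hd e) →+ edge e

attribute [instance] CoeffSys.vertGrp CoeffSys.edgeGrp

namespace CoeffSys

variable {V E : Type} {tl hd : E → V}

/-- The differential of the two-term cochain complex associated to a coefficient system. -/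
def d (A : CoeffSys tl hd) : ((v : V) → A.vert v) →+ ((e : E) → A.edge e) where
  toFun a := fun e => A.mapT e (a (tl e)) + A.mapH e (a (hd e))
  map_zero' := by funext e; simp
  map_add' x y := by funext e; simp only [Pi.add_apply, map_add]; abel

/-- `H⁰(Γ, A)` is the kernel of the differential. -/
abbrev H0 (A : CoeffSys tl hd) : AddSubgroup ((v : V) → A.vert v) := A.d.ker

/-- `H¹(Γ, A)` is the cokernel of the differential. -/
abbrev H1 (A : CoeffSys tl hd) : Type := ((e : E) → A.edge e) ⧸ A.d.range

end CoeffSys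

namespace CoeffSys

variable {V E : Type} {tl hd : E → V}

/-- Transport of vertex groups along an equality of vertices. -/
def vcast (A : CoeffSys tl hd) {u v : V} (huv : u = v) : A.vert u ≃+ A.vert v := by
  subst huv; exact AddEquiv.refl _

/-- The inverse of the (bijective) tail half-edge map at `e₀`, as a homomorphism. -/
noncomputable def invT (A : CoeffSys tl hd) (e₀ : E)
    (hbij : Function.Bijective (A.mapT e₀)) : A.edge e₀ →+ A.vert (tl e₀) :=
  (AddEquiv.ofBijective (A.mapT e₀) hbij).symm.toAddMonoidHom

variable [DecidableEq V] [DecidableEq E]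

/-- The map sending a vertex of `Γ` to the corresponding vertex of the contracted graph
`Γ/e₀`, where `x = tl e₀` is identified with `y = hd e₀` (the vertex `[xy]` is represented
by `hd e₀`). -/
def πV (tl hd : E → V) (e₀ : E) (hne : tl e₀ ≠ hd e₀) (v : V) : {v : V // v ≠ tl e₀} :=
  ⟨if v = tl e₀ then hd e₀ else v, by
    split
    · exact fun hc => hne hc.symm
    · assumption⟩

/-- The half-edge maps of the contracted coefficient system `A/α`: an old half-edge map
`m : A_v →+ A_f` is unchanged if `v ≠ tl e₀`, and if `v = tl e₀` it becomes the composite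
`A_y → A_{e₀} → A_x → A_f` where the middle map is `-(A.mapT e₀)⁻¹`. -/
noncomputable def contrHalf (A : CoeffSys tl hd) (e₀ : E)
    (hbij : Function.Bijective (A.mapT e₀)) {f : E} (v : V) (m : A.vert v →+ A.edge f) :
    A.vert (if v = tl e₀ then hd e₀ else v) →+ A.edge f :=
  if hv : v = tl e₀ then
    m.comp ((A.vcast hv.symm).toAddMonoidHom.comp
      ((-(A.invT e₀ hbij)).comp
        ((A.mapH e₀).comp (A.vcast (if_pos hv)).toAddMonoidHom)))
  else m.comp (A.vcast (if_neg hv)).toAddMonoidHom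

/-- The contraction `A/α` of the coefficient system `A` along the redundant tail
half-edge of `e₀`. -/
noncomputable def contrSys (A : CoeffSys tl hd) (e₀ : E) (hne : tl e₀ ≠ hd e₀)
    (hbij : Function.Bijective (A.mapT e₀)) :
    CoeffSys (fun e' : {e : E // e ≠ e₀} => πV tl hd e₀ hne (tl e'.1))
      (fun e' : {e : E // e ≠ e₀} => πV tl hd e₀ hne (hd e'.1)) where
  vert v' := A.vert v'.1
  edge e' := A.edge e'.1
  mapT e' := A.contrHalf e₀ hbij (tl e'.1) (A.mapT e'.1)
  mapH e' := A.contrHalf e₀ hbij (hd e'.1) (A.mapH e'.1)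

/-- The degree-0 part of the comparison map `π : C(Γ/e₀, A/α) → C(Γ, A)`:
`a ↦ (−A_{e₀,t}^{−1}(A_{e₀,h}(a_{[xy]})), a)`. -/
noncomputable def π0 (A : CoeffSys tl hd) (e₀ : E) (hne : tl e₀ ≠ hd e₀)
    (hbij : Function.Bijective (A.mapT e₀)) :
    ((v' : {v : V // v ≠ tl e₀}) → A.vert v'.1) →+ ((v : V) → A.vert v) where
  toFun a := fun v =>
    if hv : v = tl e₀ then
      A.vcast hv.symm (-(A.invT e₀ hbij (A.mapH e₀ (a ⟨hd e₀, fun hc => hne hc.symm⟩))))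
    else a ⟨v, hv⟩
  map_zero' := by
    funext v
    by_cases hv : v = tl e₀ <;> simp [hv]
  map_add' x y := by
    funext v
    by_cases hv : v = tl e₀ <;> simp [hv, neg_add] <;> abel

/-- The degree-1 part of the comparison map `π : C(Γ/e₀, A/α) → C(Γ, A)`: the canonical
identification on each edge `f ≠ e₀`, and `0` in the component at `e₀`. -/
def π1 (A : CoeffSys tl hd) (e₀ : E) :
    ((e' : {e : E // e ≠ e₀}) → A.edge e'.1) →+ ((e : E) → A.edge e) where
  toFun b := fun e => if he : e = e₀ then 0 else b ⟨e, he⟩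
  map_zero' := by
    funext e
    by_cases he : e = e₀ <;> simp [he]
  map_add' x y := by
    funext e
    by_cases he : e = e₀ <;> simp [he]

end CoeffSys

namespace CoeffSys

variable {V E : Type} {tl hd : E → V}

lemma vcast_self (A : CoeffSys tl hd) {u : V} (h : u = u) (a : A.vert u) :
    A.vcast h a = a := rfl

lemma mapT_invT (A : CoeffSys tl hd) (e₀ : E) (hbij : Function.Bijective (A.mapT e₀))
    (z : A.edge e₀) : A.mapT e₀ (A.invT e₀ hbij z) = z :=
  (AddEquiv.ofBijective (A.mapT e₀) hbij).apply_symm_apply z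

variable [DecidableEq V] [DecidableEq E]

lemma vcast_pi (A : CoeffSys tl hd) (e₀ : E) (hne : tl e₀ ≠ hd e₀)
    (b : (v' : {v : V // v ≠ tl e₀}) → A.vert v'.1)
    (v w : V) (h : (if v = tl e₀ then hd e₀ else v) = w) (hw : w ≠ tl e₀) :
    A.vcast h (b (πV tl hd e₀ hne v)) = b ⟨w, hw⟩ := by
  subst h
  rfl

lemma contrHalf_apply (A : CoeffSys tl hd) (e₀ : E) (hne : tl e₀ ≠ hd e₀)
    (hbij : Function.Bijective (A.mapT e₀)) {f : E} (v : V)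
    (m : A.vert v →+ A.edge f) (b : (v' : {v : V // v ≠ tl e₀}) → A.vert v'.1) :
    A.contrHalf e₀ hbij v m (b (πV tl hd e₀ hne v)) = m (A.π0 e₀ hne hbij b v) := by
  by_cases hv : v = tl e₀
  · subst hv
    rw [contrHalf, dif_pos rfl]
    simp only [AddMonoidHom.coe_comp, AddEquiv.coe_toAddMonoidHom, Function.comp_apply,
      AddMonoidHom.neg_apply]
    refine (congrArg m (congrArg (A.vcast _) (congrArg (-(A.invT e₀ hbij)) (congrArg (A.mapH e₀)
      (A.vcast_pi e₀ hne b _ (hd e₀) (if_pos rfl) (fun hc => hne hc.symm)))))).trans ?_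
    rw [π0]
    simp only [AddMonoidHom.coe_mk, ZeroHom.coe_mk, dite_true]
    rfl
  · rw [contrHalf, dif_neg hv]
    simp only [AddMonoidHom.coe_comp, AddEquiv.coe_toAddMonoidHom, Function.comp_apply]
    refine congrArg m ((A.vcast_pi e₀ hne b _ v (if_neg hv) hv).trans ?_)
    rw [π0]
    simp only [AddMonoidHom.coe_mk, ZeroHom.coe_mk]
    rw [dif_neg hv]

end CoeffSys

open CoeffSys in
/-- The comparison map `π` from the cochain complex of the contraction
`(Γ/e₀, A/α)` along a redundant (tail) half-edge to the cochain complex of `(Γ, A)`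
commutes with the differentials, induces an isomorphism on `H⁰` (it maps the kernel of
the differential bijectively onto the kernel), and induces an isomorphism on `H¹`
(the induced map of cokernels is injective and surjective). -/
theorem contraction_iso {V E : Type} [Fintype V] [Fintype E] [DecidableEq V] [DecidableEq E]
    {tl hd : E → V} (A : CoeffSys tl hd) (e₀ : E) (hne : tl e₀ ≠ hd e₀)
    (hbij : Function.Bijective (A.mapT e₀)) :
    (∀ b, A.π1 e₀ ((A.contrSys e₀ hne hbij).d b) = A.d (A.π0 e₀ hne hbij b)) ∧
    (∀ a : (v' : {v : V // v ≠ tl e₀}) → A.vert v'.1,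
      (A.contrSys e₀ hne hbij).d a = 0 → A.d (A.π0 e₀ hne hbij a) = 0) ∧
    (∀ a a' : (v' : {v : V // v ≠ tl e₀}) → A.vert v'.1,
      (A.contrSys e₀ hne hbij).d a = 0 → (A.contrSys e₀ hne hbij).d a' = 0 →
      A.π0 e₀ hne hbij a = A.π0 e₀ hne hbij a' → a = a') ∧
    (∀ c : (v : V) → A.vert v, A.d c = 0 →
      ∃ a, (A.contrSys e₀ hne hbij).d a = 0 ∧ A.π0 e₀ hne hbij a = c) ∧
    (∀ b, A.π1 e₀ b ∈ A.d.range → b ∈ (A.contrSys e₀ hne hbij).d.range) ∧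
    (∀ c : (e : E) → A.edge e, ∃ b, c - A.π1 e₀ b ∈ A.d.range) := by
  have hy : hd e₀ ≠ tl e₀ := fun hc => hne hc.symm
  -- key commutation
  have key : ∀ b, A.π1 e₀ ((A.contrSys e₀ hne hbij).d b) = A.d (A.π0 e₀ hne hbij b) := by
    intro b
    funext e
    simp only [π1, d, contrSys, AddMonoidHom.coe_mk, ZeroHom.coe_mk]
    by_cases he : e = e₀
    · subst he
      obtain ⟨b', rfl⟩ : ∃ b' : ((v' : {v : V // v ≠ tl e}) → A.vert v'.1), b' = b := ⟨b, rfl⟩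
      rw [dif_pos rfl]
      rw [π0]
      simp only [AddMonoidHom.coe_mk, ZeroHom.coe_mk, dite_true]
      rw [dif_neg hy, vcast_self, map_neg, mapT_invT]
      abel
    · rw [dif_neg he]
      exact congrArg₂ (· + ·)
        (A.contrHalf_apply e₀ hne hbij (tl e) (A.mapT e) b)
        (A.contrHalf_apply e₀ hne hbij (hd e) (A.mapH e) b)
  -- pointwise values of π0 and π1
  have hπ0_neg : ∀ (b : (v' : {v : V // v ≠ tl e₀}) → A.vert v'.1) (v : V) (hv : v ≠ tl e₀),
      A.π0 e₀ hne hbij b v = b ⟨v, hv⟩ := by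
    intro b v hv
    simp only [π0, AddMonoidHom.coe_mk, ZeroHom.coe_mk]
    rw [dif_neg hv]
  have hπ1_neg : ∀ (b : (e' : {e : E // e ≠ e₀}) → A.edge e'.1) (e : E) (he : e ≠ e₀),
      A.π1 e₀ b e = b ⟨e, he⟩ := by
    intro b e he
    simp only [π1, AddMonoidHom.coe_mk, ZeroHom.coe_mk]
    rw [dif_neg he]
  have hπ1_pos : ∀ (b : (e' : {e : E // e ≠ e₀}) → A.edge e'.1),
      A.π1 e₀ b e₀ = 0 := by
    intro b
    simp only [π1, AddMonoidHom.coe_mk, ZeroHom.coe_mk, dite_true]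
  -- if d c vanishes at e₀ then π0 of restriction of c is c
  have hsec : ∀ c : (v : V) → A.vert v, A.d c e₀ = 0 →
      A.π0 e₀ hne hbij (fun v' => c v'.1) = c := by
    intro c hc
    funext v
    by_cases hv : v = tl e₀
    · subst hv
      simp only [π0, AddMonoidHom.coe_mk, ZeroHom.coe_mk, dite_true]
      rw [vcast_self]
      apply hbij.injective
      rw [map_neg, mapT_invT]
      simp only [d, AddMonoidHom.coe_mk, ZeroHom.coe_mk] at hc
      rw [eq_comm, ← add_eq_zero_iff_eq_neg]
      exact hc
    · exact hπ0_neg _ v hv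
  refine ⟨key, ?_, ?_, ?_, ?_, ?_⟩
  · -- kernel to kernel
    intro a ha
    funext e
    have := congrFun (key a) e
    rw [ha] at this
    erw [map_zero] at this
    rw [← this]
  · -- injectivity on H0
    intro a a' _ _ hpi
    funext v'
    have := congrFun hpi v'.1
    rw [hπ0_neg a v'.1 v'.2, hπ0_neg a' v'.1 v'.2] at this
    exact this
  · -- surjectivity on H0
    intro c hc
    refine ⟨fun v' => c v'.1, ?_, hsec c (by rw [hc]; rfl)⟩
    funext e'
    have h1 := congrFun (key (fun v' => c v'.1)) e'.1
    rw [hsec c (by rw [hc]; rfl), hc] at h1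
    have h2 := hπ1_neg ((A.contrSys e₀ hne hbij).d (fun v' => c v'.1)) e'.1 e'.2
    rw [h1] at h2
    exact h2.symm
  · -- injectivity on H1
    intro b hb
    obtain ⟨c, hc⟩ := hb
    have hc0 : A.d c e₀ = 0 := by
      rw [hc, hπ1_pos]
    refine ⟨fun v' => c v'.1, ?_⟩
    funext e'
    have h1 := congrFun (key (fun v' => c v'.1)) e'.1
    rw [hsec c hc0] at h1
    have h2 := hπ1_neg ((A.contrSys e₀ hne hbij).d (fun v' => c v'.1)) e'.1 e'.2
    have h3 := hπ1_neg b e'.1 e'.2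
    exact h2.symm.trans (h1.trans ((congrFun hc e'.1).trans h3))
  · -- surjectivity on H1
    intro c
    set a : (v : V) → A.vert v :=
      fun v => if hv : v = tl e₀ then A.vcast hv.symm (A.invT e₀ hbij (c e₀)) else 0 with ha
    refine ⟨fun e' => c e'.1 - A.d a e'.1, ⟨a, ?_⟩⟩
    funext e
    by_cases he : e = e₀
    · subst he
      rw [Pi.sub_apply, hπ1_pos, sub_zero]
      simp only [d, AddMonoidHom.coe_mk, ZeroHom.coe_mk, ha, dite_true]
      rw [dif_neg hy, vcast_self, mapT_invT, map_zero, add_zero]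
    · rw [Pi.sub_apply, hπ1_neg _ e he]
      simp only [sub_sub_cancel]
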